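/- Let Σ* be a PSD matrix whose eigenvalues are all at most λ_max, with orthogonal projection Π* onto its range (assume rank(Σ*) ≤ r and Π* has rank r). Let Π be any rank-r orthogonal projection with ‖Π − Π*‖_F² ≤ ε. Then for any symmetric matrix Σ̃, ‖Σ* − Π Σ̃ Π‖_F² ≤ 8 λ_max² ε + 2‖Π Σ* Π − Π Σ̃ Π‖_F². -/

import Mathlib

open scoped BigOperators
open Matrix

noncomputable def lpNorm {n : ℕ} (p : ℝ) (v : Fin n → ℝ) : ℝ :=
  (∑ i, |v i| ^ p) ^ (1 / p)

noncomputable def opNorm {m n : ℕ} (p q : ℝ) (A : Matrix (Fin m) (Fin n) ℝ) : ℝ :=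
  sSup {t : ℝ | ∃ v : Fin n → ℝ, v ≠ 0 ∧ t = lpNorm q (A.mulVec v) / lpNorm p v}

noncomputable def frobSq {m n : ℕ} (A : Matrix (Fin m) (Fin n) ℝ) : ℝ :=
  ∑ i, ∑ j, (A i j) ^ 2

section aux

variable {n : ℕ}

lemma frobSq_eq_trace {m n : ℕ} (A : Matrix (Fin m) (Fin n) ℝ) :
    frobSq A = (A * Aᵀ).trace := by
  simp [frobSq, Matrix.trace, Matrix.diag, Matrix.mul_apply, sq]

lemma frobSq_transpose {m n : ℕ} (A : Matrix (Fin m) (Fin n) ℝ) :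
    frobSq Aᵀ = frobSq A := by
  simp only [frobSq, Matrix.transpose_apply]
  exact Finset.sum_comm

lemma frobSq_neg {m n : ℕ} (A : Matrix (Fin m) (Fin n) ℝ) :
    frobSq (-A) = frobSq A := by
  simp [frobSq]

lemma frobSq_add_le {m n : ℕ} (A B : Matrix (Fin m) (Fin n) ℝ) :
    frobSq (A + B) ≤ 2 * frobSq A + 2 * frobSq B := by
  simp only [frobSq, Finset.mul_sum, ← Finset.sum_add_distrib]
  refine Finset.sum_le_sum fun i _ => Finset.sum_le_sum fun j _ => ?_
  simp only [Matrix.add_apply]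
  nlinarith [sq_nonneg (A i j - B i j)]

lemma psd_trace_nonneg {M : Matrix (Fin n) (Fin n) ℝ} (hM : M.PosSemidef) :
    0 ≤ M.trace := by
  refine Finset.sum_nonneg fun i _ => ?_
  have := hM.diag_nonneg (i := i)
  simpa [dotProduct, Matrix.mulVec, Pi.single_apply] using this

lemma conjT_eq_transpose {m n : ℕ} (A : Matrix (Fin m) (Fin n) ℝ) : Aᴴ = Aᵀ := by
  ext i j
  simp [Matrix.conjTranspose_apply]

/-- `lam ^ 2 • 1 - S * S` is PSD when `S` is PSD with eigenvalues at most `lam`. -/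
lemma smul_one_sub_sq_psd {S : Matrix (Fin n) (Fin n) ℝ} (hS : S.PosSemidef) {lam : ℝ}
    (heig : ∀ i, hS.1.eigenvalues i ≤ lam) :
    ((lam ^ 2) • (1 : Matrix (Fin n) (Fin n) ℝ) - S * S).PosSemidef := by
  set U : Matrix (Fin n) (Fin n) ℝ := (hS.1.eigenvectorUnitary : Matrix (Fin n) (Fin n) ℝ)
  have hU : U * star U = 1 := Matrix.mem_unitaryGroup_iff.mp hS.1.eigenvectorUnitary.2
  have hU' : star U * U = 1 := Matrix.mem_unitaryGroup_iff'.mp hS.1.eigenvectorUnitary.2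
  have hspec : S = U * Matrix.diagonal (fun i => hS.1.eigenvalues i) * star U := by
    have := hS.1.spectral_theorem
    simpa using this
  have key : (lam ^ 2) • (1 : Matrix (Fin n) (Fin n) ℝ) - S * S
      = U * Matrix.diagonal (fun i => lam ^ 2 - hS.1.eigenvalues i ^ 2) * star U := by
    have h1 : S * S = U * Matrix.diagonal (fun i => hS.1.eigenvalues i ^ 2) * star U := by
      conv_lhs => rw [hspec]
      have : (U * Matrix.diagonal (fun i => hS.1.eigenvalues i) * star U) *
          (U * Matrix.diagonal (fun i => hS.1.eigenvalues i) * star U)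
          = U * (Matrix.diagonal (fun i => hS.1.eigenvalues i) * (star U * U) *
            Matrix.diagonal (fun i => hS.1.eigenvalues i)) * star U := by
        noncomm_ring
      rw [this, hU', Matrix.mul_one, Matrix.diagonal_mul_diagonal]
      congr 1
      ext i
      ring
    have h2 : (lam ^ 2) • (1 : Matrix (Fin n) (Fin n) ℝ)
        = U * Matrix.diagonal (fun _ => lam ^ 2) * star U := by
      rw [← Matrix.smul_one_eq_diagonal, Matrix.mul_smul, Matrix.mul_one, Matrix.smul_mul, hU]
    rw [h1, h2, ← Matrix.sub_mul, ← Matrix.mul_sub, Matrix.diagonal_sub]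
  rw [key]
  have hd : (Matrix.diagonal (fun i => lam ^ 2 - hS.1.eigenvalues i ^ 2)).PosSemidef := by
    refine Matrix.posSemidef_diagonal_iff.mpr fun i => ?_
    have h0 := hS.eigenvalues_nonneg i
    have h1 := heig i
    nlinarith
  simpa [Matrix.star_eq_conjTranspose] using hd.mul_mul_conjTranspose_same U

lemma frobSq_mul_psd_le {S : Matrix (Fin n) (Fin n) ℝ} (hS : S.PosSemidef) {lam : ℝ}
    (heig : ∀ i, hS.1.eigenvalues i ≤ lam) (B : Matrix (Fin n) (Fin n) ℝ) :
    frobSq (B * S) ≤ lam ^ 2 * frobSq B := by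
  have hM := smul_one_sub_sq_psd hS heig
  have htr := psd_trace_nonneg (hM.mul_mul_conjTranspose_same B)
  rw [conjT_eq_transpose] at htr
  have hSsymm : Sᵀ = S := by rw [← conjT_eq_transpose]; exact hS.1.eq
  have hexp : B * ((lam ^ 2) • (1 : Matrix (Fin n) (Fin n) ℝ) - S * S) * Bᵀ
      = (lam ^ 2) • (B * Bᵀ) - (B * S) * (B * S)ᵀ := by
    rw [Matrix.mul_sub, Matrix.sub_mul, Matrix.transpose_mul, hSsymm]
    rw [Matrix.mul_smul, Matrix.mul_one, Matrix.smul_mul]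
    noncomm_ring
  rw [hexp, Matrix.trace_sub, Matrix.trace_smul, sub_nonneg] at htr
  rw [frobSq_eq_trace, frobSq_eq_trace]
  simpa using htr

lemma frobSq_proj_mul_le {P : Matrix (Fin n) (Fin n) ℝ} (hP1 : P.IsSymm)
    (hP2 : P * P = P) (X : Matrix (Fin n) (Fin n) ℝ) :
    frobSq (P * X) ≤ frobSq X := by
  have h1P : ((1 : Matrix (Fin n) (Fin n) ℝ) - P).PosSemidef := by
    have h := Matrix.posSemidef_conjTranspose_mul_self ((1 : Matrix (Fin n) (Fin n) ℝ) - P)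
    have he : ((1 : Matrix (Fin n) (Fin n) ℝ) - P)ᴴ * ((1 : Matrix (Fin n) (Fin n) ℝ) - P)
        = (1 : Matrix (Fin n) (Fin n) ℝ) - P := by
      rw [conjT_eq_transpose, Matrix.transpose_sub, Matrix.transpose_one, hP1.eq]
      rw [Matrix.sub_mul, Matrix.mul_sub, Matrix.mul_sub, hP2]
      noncomm_ring
    rwa [he] at h
  have htr := psd_trace_nonneg (h1P.conjTranspose_mul_mul_same X)
  rw [conjT_eq_transpose] at htr
  have hexp : Xᵀ * ((1 : Matrix (Fin n) (Fin n) ℝ) - P) * X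
      = Xᵀ * X - (P * X)ᵀ * (P * X) := by
    rw [Matrix.transpose_mul, hP1.eq]
    rw [Matrix.mul_sub, Matrix.sub_mul, Matrix.mul_one]
    have : Xᵀ * P * X = Xᵀ * P * (P * X) := by
      rw [← Matrix.mul_assoc, Matrix.mul_assoc (Xᵀ) P P, hP2]
    rw [this]
  rw [hexp, Matrix.trace_sub, sub_nonneg] at htr
  rw [frobSq_eq_trace, frobSq_eq_trace, Matrix.trace_mul_comm (P * X) (P * X)ᵀ,
    Matrix.trace_mul_comm X Xᵀ]
  exact htr

end aux

theorem stmt14 {n : ℕ} (r : ℕ) (lammax ε : ℝ)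
    (S : Matrix (Fin n) (Fin n) ℝ) (hS : S.PosSemidef)
    (heig : ∀ i, hS.1.eigenvalues i ≤ lammax)
    (hrankS : S.rank ≤ r)
    (Pstar : Matrix (Fin n) (Fin n) ℝ) (hPs1 : Pstar.IsSymm)
    (hPs2 : Pstar * Pstar = Pstar) (hPsr : Pstar.rank = r)
    (hran : Pstar * S * Pstar = S)
    (P : Matrix (Fin n) (Fin n) ℝ) (hP1 : P.IsSymm) (hP2 : P * P = P)
    (hPr : P.rank = r) (hclose : frobSq (P - Pstar) ≤ ε)
    (T : Matrix (Fin n) (Fin n) ℝ) (hT : T.IsSymm) :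
    frobSq (S - P * T * P) ≤ 8 * lammax ^ 2 * ε + 2 * frobSq (P * S * P - P * T * P) := by
  set Δ : Matrix (Fin n) (Fin n) ℝ := Pstar - P with hΔ
  have hSsymm : Sᵀ = S := by rw [← conjT_eq_transpose]; exact hS.1.eq
  -- Pstar * S = S and S * Pstar = S
  have hPsS : Pstar * S = S := by
    conv_lhs => rw [← hran]
    rw [← Matrix.mul_assoc, ← Matrix.mul_assoc, hPs2, hran]
  have hSPs : S * Pstar = S := by
    conv_lhs => rw [← hran]
    rw [Matrix.mul_assoc, Matrix.mul_assoc, hPs2, ← Matrix.mul_assoc, hran]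
  have hΔε : frobSq Δ ≤ ε := by
    have : Δ = -(P - Pstar) := by rw [hΔ, neg_sub]
    rw [this, frobSq_neg]; exact hclose
  -- decomposition
  have hdecomp : S - P * S * P = Δ * S + P * S * Δ := by
    rw [hΔ, Matrix.sub_mul, Matrix.mul_sub, hPsS]
    rw [Matrix.mul_assoc P S Pstar, hSPs]
    noncomm_ring
  have hΔS : frobSq (Δ * S) ≤ lammax ^ 2 * ε := by
    calc frobSq (Δ * S) ≤ lammax ^ 2 * frobSq Δ := frobSq_mul_psd_le hS heig Δ
      _ ≤ lammax ^ 2 * ε := by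
        have := sq_nonneg lammax
        nlinarith
  have hΔsymm : Δᵀ = Δ := by
    rw [hΔ, Matrix.transpose_sub, hPs1.eq, hP1.eq]
  have hPSΔ : frobSq (P * S * Δ) ≤ lammax ^ 2 * ε := by
    have h1 : frobSq (P * (S * Δ)) ≤ frobSq (S * Δ) := frobSq_proj_mul_le hP1 hP2 _
    have h2 : frobSq (S * Δ) = frobSq (Δ * S) := by
      rw [← frobSq_transpose (S * Δ), Matrix.transpose_mul, hSsymm, hΔsymm]
    rw [Matrix.mul_assoc]
    calc frobSq (P * (S * Δ)) ≤ frobSq (S * Δ) := h1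
      _ = frobSq (Δ * S) := h2
      _ ≤ lammax ^ 2 * ε := hΔS
  have hmid : frobSq (S - P * S * P) ≤ 4 * lammax ^ 2 * ε := by
    rw [hdecomp]
    calc frobSq (Δ * S + P * S * Δ) ≤ 2 * frobSq (Δ * S) + 2 * frobSq (P * S * Δ) :=
        frobSq_add_le _ _
      _ ≤ 4 * lammax ^ 2 * ε := by linarith
  have hsplit : S - P * T * P = (S - P * S * P) + (P * S * P - P * T * P) :=
    (sub_add_sub_cancel S (P * S * P) (P * T * P)).symm
  calc frobSq (S - P * T * P)
      = frobSq ((S - P * S * P) + (P * S * P - P * T * P)) := by rw [← hsplit]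
    _ ≤ 2 * frobSq (S - P * S * P) + 2 * frobSq (P * S * P - P * T * P) := frobSq_add_le _ _
    _ ≤ 8 * lammax ^ 2 * ε + 2 * frobSq (P * S * P - P * T * P) := by linarith
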